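/- Let F be a field, N ≥ 0 an integer, and let A ∈ Mat_{N+1}(F) be irreducible tridiagonal. Let E ∈ Mat_{N+1}(F) be the matrix whose (0,0)-entry is 1 and all other entries are 0. Then the (N+1)² matrices A^r·E·A^s for r,s ∈ {0,1,…,N} form a basis of the F-vector space Mat_{N+1}(F). -/

import Mathlib

open Matrix

/-- A square matrix (rows and columns indexed by `Fin (N+1)`) is irreducible tridiagonal
if its `(i,j)`-entry is zero whenever `|i−j| > 1` and nonzero whenever `|i−j| = 1`. -/
def IsIrredTridiagonal {F : Type*} [Field F] {n : ℕ}
    (A : Matrix (Fin n) (Fin n) F) : Prop :=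
  (∀ i j : Fin n, ((i : ℕ) + 1 < (j : ℕ) ∨ (j : ℕ) + 1 < (i : ℕ)) → A i j = 0) ∧
  (∀ i j : Fin n, ((i : ℕ) + 1 = (j : ℕ) ∨ (j : ℕ) + 1 = (i : ℕ)) → A i j ≠ 0)

section aux

variable {F : Type*} [Field F] {N : ℕ}

lemma tri_pow_zero (A : Matrix (Fin (N + 1)) (Fin (N + 1)) F) (hA : IsIrredTridiagonal A) :
    ∀ (r : ℕ) (i : Fin (N + 1)), r < (i : ℕ) → (A ^ r) i 0 = 0 := by
  intro r
  induction r with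
  | zero =>
    intro i hi
    have : i ≠ 0 := by
      intro h; rw [h] at hi; simp at hi
    simp [Matrix.one_apply, this]
  | succ r ih =>
    intro i hi
    rw [pow_succ', Matrix.mul_apply]
    apply Finset.sum_eq_zero
    intro k _
    rcases lt_or_ge ((k : ℕ) + 1) (i : ℕ) with h | h
    · rw [hA.1 i k (Or.inr h), zero_mul]
    · have : r < (k : ℕ) := by omega
      rw [ih k this, mul_zero]

lemma tri_pow_diag (A : Matrix (Fin (N + 1)) (Fin (N + 1)) F) (hA : IsIrredTridiagonal A) :
    ∀ (i : Fin (N + 1)), (A ^ (i : ℕ)) i 0 ≠ 0 := by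
  suffices h : ∀ (r : ℕ) (hr : r < N + 1), (A ^ r) ⟨r, hr⟩ 0 ≠ 0 by
    intro i
    have := h (i : ℕ) i.isLt
    simpa using this
  intro r
  induction r with
  | zero => intro hr; simp [Matrix.one_apply, show (⟨0, hr⟩ : Fin (N+1)) = 0 from rfl]
  | succ r ih =>
    intro hr
    have hr' : r < N + 1 := Nat.lt_of_succ_lt hr
    rw [pow_succ', Matrix.mul_apply]
    rw [Finset.sum_eq_single (⟨r, hr'⟩ : Fin (N + 1))]
    · exact mul_ne_zero (hA.2 ⟨r + 1, hr⟩ ⟨r, hr'⟩ (Or.inr rfl)) (ih hr')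
    · intro k _ hk
      rcases lt_trichotomy (k : ℕ) r with h | h | h
      · rw [hA.1 ⟨r + 1, hr⟩ k (Or.inr (by simpa using h)), zero_mul]
      · exact absurd (Fin.ext h) hk
      · rw [tri_pow_zero A hA r k h, mul_zero]
    · intro h; exact absurd (Finset.mem_univ _) h

lemma tri_transpose (A : Matrix (Fin (N + 1)) (Fin (N + 1)) F) (hA : IsIrredTridiagonal A) :
    IsIrredTridiagonal Aᵀ :=
  ⟨fun i j h => hA.1 j i h.symm, fun i j h => hA.2 j i h.symm⟩

end aux


lemma mul_std_mul {F : Type*} [Field F] {n : ℕ} (X Y : Matrix (Fin n) (Fin n) F)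
    (a b : Fin n) (i j : Fin n) :
    (X * Matrix.single a b (1 : F) * Y) i j = X i a * Y b j := by
  rw [Matrix.mul_apply, Finset.sum_eq_single b]
  · rw [Matrix.mul_single_apply_same, mul_one]
  · intro k _ hk
    rw [Matrix.mul_single_apply_of_ne 1 a b i k hk, zero_mul]
  · intro h; exact absurd (Finset.mem_univ _) h

/-- Let `A ∈ Mat_{N+1}(F)` be irreducible tridiagonal and let `E` be the matrix with
`(0,0)`-entry `1` and all other entries `0`.  Then the `(N+1)²` matrices `A^r E A^s`
for `0 ≤ r, s ≤ N` form a basis of `Mat_{N+1}(F)`. -/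
theorem stmt17 (F : Type*) [Field F] (N : ℕ)
    (A : Matrix (Fin (N + 1)) (Fin (N + 1)) F) (hA : IsIrredTridiagonal A)
    (E : Matrix (Fin (N + 1)) (Fin (N + 1)) F)
    (hE : E = Matrix.single 0 0 (1 : F)) :
    LinearIndependent F
      (fun rs : Fin (N + 1) × Fin (N + 1) => A ^ (rs.1 : ℕ) * E * A ^ (rs.2 : ℕ)) ∧
    Submodule.span F
      (Set.range fun rs : Fin (N + 1) × Fin (N + 1) => A ^ (rs.1 : ℕ) * E * A ^ (rs.2 : ℕ))
      = ⊤ := by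
  set U : Matrix (Fin (N + 1)) (Fin (N + 1)) F :=
    Matrix.of fun i r => (A ^ (r : ℕ)) i 0 with hU
  set V : Matrix (Fin (N + 1)) (Fin (N + 1)) F :=
    Matrix.of fun s j => (A ^ (s : ℕ)) 0 j with hV
  have hAT : IsIrredTridiagonal Aᵀ := tri_transpose A hA
  have hVe : ∀ s j : Fin (N + 1), V s j = (Aᵀ ^ (s : ℕ)) j 0 := by
    intro s j
    rw [hV]
    show (A ^ (s : ℕ)) 0 j = (Aᵀ ^ (s : ℕ)) j 0
    rw [← Matrix.transpose_pow, Matrix.transpose_apply]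
  have hUdet : IsUnit U.det := by
    have htri : U.BlockTriangular id := by
      intro i j hij
      exact tri_pow_zero A hA (j : ℕ) i hij
    rw [Matrix.det_of_upperTriangular htri]
    rw [isUnit_iff_ne_zero, Finset.prod_ne_zero_iff]
    intro i _
    exact tri_pow_diag A hA i
  have hVdet : IsUnit V.det := by
    have htri : V.BlockTriangular ⇑OrderDual.toDual := by
      intro s j hsj
      rw [hVe]
      exact tri_pow_zero Aᵀ hAT (s : ℕ) j hsj
    rw [Matrix.det_of_lowerTriangular V htri]
    rw [isUnit_iff_ne_zero, Finset.prod_ne_zero_iff]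
    intro s _
    rw [hVe]
    exact tri_pow_diag Aᵀ hAT s
  let e : Matrix (Fin (N + 1)) (Fin (N + 1)) F ≃ₗ[F] Matrix (Fin (N + 1)) (Fin (N + 1)) F :=
  { toFun := fun X => U * X * V
    map_add' := fun X Y => by noncomm_ring
    map_smul' := fun c X => by
      simp [Matrix.mul_smul, Matrix.smul_mul]
    invFun := fun X => U⁻¹ * X * V⁻¹
    left_inv := fun X => by
      simp only []
      calc U⁻¹ * (U * X * V) * V⁻¹ = (U⁻¹ * U) * X * (V * V⁻¹) := by noncomm_ring
        _ = X := by rw [Matrix.nonsing_inv_mul U hUdet, Matrix.mul_nonsing_inv V hVdet,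
              one_mul, mul_one]
    right_inv := fun X => by
      simp only []
      calc U * (U⁻¹ * X * V⁻¹) * V = (U * U⁻¹) * X * (V⁻¹ * V) := by noncomm_ring
        _ = X := by rw [Matrix.mul_nonsing_inv U hUdet, Matrix.nonsing_inv_mul V hVdet,
              one_mul, mul_one] }
  have key : (fun rs : Fin (N + 1) × Fin (N + 1) => A ^ (rs.1 : ℕ) * E * A ^ (rs.2 : ℕ))
      = fun rs => e ((Matrix.stdBasis F (Fin (N + 1)) (Fin (N + 1))) rs) := by
    funext rs
    obtain ⟨r, s⟩ := rs
    rw [Matrix.stdBasis_eq_single]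
    show A ^ (r : ℕ) * E * A ^ (s : ℕ) = U * Matrix.single r s (1 : F) * V
    ext i j
    rw [mul_std_mul]
    rw [hE]
    rw [mul_std_mul]
    rfl
  have hb : (fun rs => e ((Matrix.stdBasis F (Fin (N + 1)) (Fin (N + 1))) rs))
      = ⇑((Matrix.stdBasis F (Fin (N + 1)) (Fin (N + 1))).map e) := by
    funext rs
    rw [Module.Basis.map_apply]
  rw [key, hb]
  exact ⟨((Matrix.stdBasis F (Fin (N + 1)) (Fin (N + 1))).map e).linearIndependent,
    ((Matrix.stdBasis F (Fin (N + 1)) (Fin (N + 1))).map e).span_eq⟩
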